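/- (Hájek–Rényi-type bound) Let Z_1,...,Z_n be independent mean-zero square-integrable random variables and c_1 ≤ c_2 ≤ ... ≤ c_n positive constants. Then for any α > 0, P(max_{1≤k≤n} |∑_{i=1}^k Z_i|/c_k > α) ≤ α^{-2} ∑_{k=1}^n E[Z_k²]/c_k². -/

import Mathlib

open MeasureTheory ProbabilityTheory Finset

noncomputable def HRps (k : ℕ) (x : (Icc 1 k : Finset ℕ) → ℝ) (m : ℕ) : ℝ :=
  ∑ i ∈ (Icc 1 k).attach, if (i : ℕ) ≤ m then x i else 0

def HRset (α : ℝ) (c : ℕ → ℝ) (k : ℕ) : Set ((Icc 1 k : Finset ℕ) → ℝ) :=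
  {x | (∀ m, 1 ≤ m → m < k → |HRps k x m| ≤ α * c m) ∧ α * c k < |HRps k x k|}

lemma HRps_meas (k m : ℕ) : Measurable (fun x => HRps k x m) := by
  apply Finset.measurable_sum
  intro i _
  by_cases h : (i : ℕ) ≤ m <;> simp [h, measurable_pi_apply]

lemma HRset_meas (α : ℝ) (c : ℕ → ℝ) (k : ℕ) : MeasurableSet (HRset α c k) := by
  have h1 : MeasurableSet {x : (Icc 1 k : Finset ℕ) → ℝ |
      ∀ m, 1 ≤ m → m < k → |HRps k x m| ≤ α * c m} := by
    have : {x : (Icc 1 k : Finset ℕ) → ℝ | ∀ m, 1 ≤ m → m < k → |HRps k x m| ≤ α * c m}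
        = ⋂ m, {x | 1 ≤ m → m < k → |HRps k x m| ≤ α * c m} := by
      ext x; simp [Set.mem_iInter]
    rw [this]
    refine MeasurableSet.iInter fun m => ?_
    by_cases h1 : 1 ≤ m
    · by_cases h2 : m < k
      · have : {x : (Icc 1 k : Finset ℕ) → ℝ | 1 ≤ m → m < k → |HRps k x m| ≤ α * c m}
            = {x | |HRps k x m| ≤ α * c m} := by ext x; simp [h1, h2]
        rw [this]
        exact measurableSet_le ((HRps_meas k m).abs) measurable_const
      · have : {x : (Icc 1 k : Finset ℕ) → ℝ | 1 ≤ m → m < k → |HRps k x m| ≤ α * c m}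
            = Set.univ := by ext x; simp [h2]
        rw [this]; exact MeasurableSet.univ
    · have : {x : (Icc 1 k : Finset ℕ) → ℝ | 1 ≤ m → m < k → |HRps k x m| ≤ α * c m}
          = Set.univ := by ext x; simp [h1]
      rw [this]; exact MeasurableSet.univ
  exact h1.inter (measurableSet_lt measurable_const ((HRps_meas k k).abs))

lemma HRps_eval {Ω : Type*} (Z : ℕ → Ω → ℝ) (k m : ℕ) (hm : m ≤ k) (ω : Ω) :
    HRps k (fun i : (Icc 1 k : Finset ℕ) => Z i ω) m = ∑ i ∈ Icc 1 m, Z i ω := by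
  rw [HRps, Finset.sum_attach (Icc 1 k) (fun i => if i ≤ m then Z i ω else 0),
    ← Finset.sum_filter]
  congr 1
  ext i
  simp only [mem_filter, mem_Icc]
  omega

lemma HRtel (f : ℕ → ℝ) (a : ℕ) : ∀ b, a ≤ b →
    ∑ j ∈ Icc a b, (f j - f (j + 1)) = f a - f (b + 1) := by
  intro b
  induction b with
  | zero => intro h; interval_cases a; simp
  | succ m ih =>
    intro h
    rcases Nat.lt_or_ge a (m + 1) with h' | h'
    · rw [Finset.sum_Icc_succ_top (by omega), ih (by omega)]
      ring
    · have : a = m + 1 := by omega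
      subst this; simp

/-- Hájek–Rényi type maximal inequality. -/
theorem hajek_renyi_bound
    {Ω : Type*} [MeasurableSpace Ω] (μ : Measure Ω) [IsProbabilityMeasure μ]
    (n : ℕ) (hn : 1 ≤ n) (Z : ℕ → Ω → ℝ) (c : ℕ → ℝ)
    (hmeas : ∀ i, Measurable (Z i))
    (hindep : iIndepFun Z μ)
    (hL2 : ∀ i, MemLp (Z i) 2 μ)
    (hmean : ∀ i, ∫ ω, Z i ω ∂μ = 0)
    (hcpos : ∀ k, 1 ≤ k → k ≤ n → 0 < c k)
    (hcmono : ∀ k, 1 ≤ k → k < n → c k ≤ c (k + 1))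
    (α : ℝ) (hα : 0 < α) :
    μ {ω | ∃ k, 1 ≤ k ∧ k ≤ n ∧ α < |∑ i ∈ Icc 1 k, Z i ω| / c k}
      ≤ ENNReal.ofReal (α⁻¹ ^ 2 * ∑ k ∈ Icc 1 n, (∫ ω, (Z k ω) ^ 2 ∂μ) / c k ^ 2) := by
  classical
  set S : ℕ → Ω → ℝ := fun k ω => ∑ i ∈ Icc 1 k, Z i ω with hSdef
  have hSmeas : ∀ k, Measurable (S k) := fun k =>
    Finset.measurable_sum _ fun i _ => hmeas i
  have hZint : ∀ i, Integrable (Z i) μ := fun i => (hL2 i).integrable one_le_two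
  have hSL2 : ∀ k, MemLp (S k) 2 μ := fun k =>
    memLp_finset_sum _ fun i _ => hL2 i
  have hSint : ∀ k, Integrable (S k) μ := fun k =>
    integrable_finset_sum _ fun i _ => hZint i
  have hSsqint : ∀ k, Integrable (fun ω => S k ω ^ 2) μ := fun k => (hSL2 k).integrable_sq
  set D : ℕ → ℝ := fun k => if k ≤ n then (c k ^ 2)⁻¹ else 0 with hDdef
  set w : ℕ → ℝ := fun k => D k - D (k + 1) with hwdef
  have hw : ∀ k, 1 ≤ k → k ≤ n → 0 ≤ w k := by
    intro k hk1 hk2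
    simp only [hwdef, hDdef, sub_nonneg]
    rcases Nat.lt_or_ge k n with h | h
    · rw [if_pos hk2, if_pos (by omega)]
      have h1 := hcpos k hk1 hk2
      have h2 := hcpos (k + 1) (by omega) (by omega)
      have h3 := hcmono k hk1 h
      apply inv_anti₀ (by positivity)
      nlinarith
    · have : ¬ (k + 1 ≤ n) := by omega
      rw [if_pos hk2, if_neg this]
      positivity
  have hDsum : ∀ k, 1 ≤ k → k ≤ n → ∑ j ∈ Icc k n, w j = D k := by
    intro k hk1 hk2
    have := HRtel D k n hk2
    simp only [hwdef]
    rw [this, hDdef]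
    simp [Nat.not_succ_le_self n]
  set A : ℕ → Set Ω := fun k =>
    {ω | (∀ m, 1 ≤ m → m < k → |S m ω| ≤ α * c m) ∧ α * c k < |S k ω|} with hAdef
  have hApre : ∀ k, A k = (fun ω (i : (Icc 1 k : Finset ℕ)) => Z i ω) ⁻¹' HRset α c k := by
    intro k
    ext ω
    simp only [hAdef, Set.mem_setOf_eq, Set.mem_preimage, HRset]
    constructor
    · rintro ⟨h1, h2⟩
      refine ⟨fun m hm1 hm2 => ?_, ?_⟩
      · rw [HRps_eval Z k m (le_of_lt hm2) ω]; exact h1 m hm1 hm2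
      · rw [HRps_eval Z k k le_rfl ω]; exact h2
    · rintro ⟨h1, h2⟩
      refine ⟨fun m hm1 hm2 => ?_, ?_⟩
      · have := h1 m hm1 hm2; rwa [HRps_eval Z k m (le_of_lt hm2) ω] at this
      · rwa [HRps_eval Z k k le_rfl ω] at h2
  have hAmeas : ∀ k, MeasurableSet (A k) := by
    intro k
    rw [hApre k]
    exact (HRset_meas α c k).preimage (measurable_pi_lambda _ fun i => hmeas i)
  have hdisj : ∀ k ∈ Icc 1 n, ∀ l ∈ Icc 1 n, k ≠ l → Disjoint (A k) (A l) := by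
    have key : ∀ k l : ℕ, k < l → 1 ≤ k → Disjoint (A k) (A l) := by
      intro k l hkl hk1
      rw [Set.disjoint_left]
      rintro ω ⟨_, h2⟩ ⟨h3, _⟩
      exact absurd (h3 k hk1 hkl) (not_le.mpr h2)
    intro k hk l hl hne
    simp only [mem_Icc] at hk hl
    rcases Nat.lt_or_ge k l with h | h
    · exact key k l h hk.1
    · exact (key l k (by omega) hl.1).symm
  have hcover : {ω | ∃ k, 1 ≤ k ∧ k ≤ n ∧ α < |∑ i ∈ Icc 1 k, Z i ω| / c k}
      = ⋃ k ∈ Icc 1 n, A k := by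
    ext ω
    simp only [Set.mem_setOf_eq, Set.mem_iUnion, mem_Icc, exists_prop]
    constructor
    · rintro ⟨k, hk1, hk2, hk3⟩
      have hex : ∃ m, 1 ≤ m ∧ m ≤ n ∧ α * c m < |S m ω| :=
        ⟨k, hk1, hk2, by rwa [← lt_div_iff₀ (hcpos k hk1 hk2)]⟩
      set k₀ := Nat.find hex with hk₀
      obtain ⟨h1, h2, h3⟩ := Nat.find_spec hex
      refine ⟨k₀, ⟨h1, h2⟩, fun m hm1 hm2 => ?_, h3⟩
      have := Nat.find_min hex hm2
      push_neg at this
      exact this hm1 (by omega)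
    · rintro ⟨k, ⟨hk1, hk2⟩, _, h2⟩
      exact ⟨k, hk1, hk2, by rwa [lt_div_iff₀ (hcpos k hk1 hk2)]⟩
  set T : Ω → ℝ := fun ω => ∑ j ∈ Icc 1 n, w j * S j ω ^ 2 with hTdef
  have hTint : Integrable T μ :=
    integrable_finset_sum _ fun j _ => (hSsqint j).const_mul _
  have hTnn : ∀ ω, 0 ≤ T ω := by
    intro ω
    apply Finset.sum_nonneg
    intro j hj
    simp only [mem_Icc] at hj
    exact mul_nonneg (hw j hj.1 hj.2) (sq_nonneg _)
  have hkey : ∀ k ∈ Icc 1 n, α ^ 2 * (μ (A k)).toReal ≤ ∫ ω in A k, T ω ∂μ := by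
    intro k hk
    simp only [mem_Icc] at hk
    obtain ⟨hk1, hk2⟩ := hk
    have hck := hcpos k hk1 hk2
    have hj : ∀ j ∈ Icc k n, α ^ 2 * c k ^ 2 * (μ (A k)).toReal ≤ ∫ ω in A k, S j ω ^ 2 ∂μ := by
      intro j hjm
      simp only [mem_Icc] at hjm
      obtain ⟨hjk, hjn⟩ := hjm
      set R : Ω → ℝ := fun ω => ∑ i ∈ Icc (k + 1) j, Z i ω with hRdef
      have hRmeas : Measurable R := Finset.measurable_sum _ fun i _ => hmeas i
      have hRint : Integrable R μ := integrable_finset_sum _ fun i _ => hZint i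
      have hRL2 : MemLp R 2 μ := memLp_finset_sum _ fun i _ => hL2 i
      have hRsqint : Integrable (fun ω => R ω ^ 2) μ := hRL2.integrable_sq
      have hRmean : ∫ ω, R ω ∂μ = 0 := by
        rw [hRdef, integral_finset_sum _ fun i _ => hZint i]
        simp [hmean]
      have hsplit : ∀ ω, S j ω = S k ω + R ω := by
        intro ω
        simp only [hSdef, hRdef]
        rw [show Icc 1 j = Ioc 0 j from Finset.Icc_add_one_left_eq_Ioc 0 j,
            show Icc 1 k = Ioc 0 k from Finset.Icc_add_one_left_eq_Ioc 0 k,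
            show Icc (k + 1) j = Ioc k j from Finset.Icc_add_one_left_eq_Ioc k j]
        exact (Finset.sum_Ioc_consecutive _ (Nat.zero_le k) hjk).symm
      have hIndep : IndepFun (Set.indicator (A k) (S k)) R μ := by
        have base := hindep.indepFun_finset (Icc 1 k) (Icc (k + 1) j)
          (by rw [Finset.disjoint_left]; intro a ha hb;
              simp only [mem_Icc] at ha hb; omega) hmeas
        have hφ : Measurable (Set.indicator (HRset α c k) (fun x => HRps k x k)) :=
          (HRps_meas k k).indicator (HRset_meas α c k)
        have hψ : Measurable (fun x : ((Icc (k + 1) j : Finset ℕ)) → ℝ => ∑ i, x i) :=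
          Finset.measurable_sum _ fun i _ => measurable_pi_apply i
        have hcomp := base.comp hφ hψ
        have e1 : (Set.indicator (HRset α c k) (fun x => HRps k x k)) ∘
            (fun ω (i : (Icc 1 k : Finset ℕ)) => Z i ω) = Set.indicator (A k) (S k) := by
          funext ω
          simp only [Function.comp]
          by_cases hω : ω ∈ A k
          · have hmem : (fun i : (Icc 1 k : Finset ℕ) => Z i ω) ∈ HRset α c k := by
              rw [hApre k] at hω; exact hω
            rw [Set.indicator_of_mem hω, Set.indicator_of_mem hmem, HRps_eval Z k k le_rfl ω]
          · have hmem : (fun i : (Icc 1 k : Finset ℕ) => Z i ω) ∉ HRset α c k := by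
              rw [hApre k] at hω; exact hω
            rw [Set.indicator_of_notMem hω, Set.indicator_of_notMem hmem]
        have e2 : (fun x : ((Icc (k + 1) j : Finset ℕ)) → ℝ => ∑ i, x i) ∘
            (fun ω (i : (Icc (k + 1) j : Finset ℕ)) => Z i ω) = R := by
          funext ω
          exact Finset.sum_coe_sort (Icc (k + 1) j) (fun i => Z i ω)
        rwa [e1, e2] at hcomp
      have hIndInt : Integrable (Set.indicator (A k) (S k)) μ := (hSint k).indicator (hAmeas k)
      have hcross : ∫ ω, Set.indicator (A k) (S k) ω * R ω ∂μ = 0 := by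
        rw [hIndep.integral_fun_mul_eq_mul_integral hIndInt.1 hRmeas.aestronglyMeasurable, hRmean, mul_zero]
      have hdecomp : ∀ ω, Set.indicator (A k) (fun ω => S j ω ^ 2) ω
          = Set.indicator (A k) (fun ω => S k ω ^ 2) ω
            + 2 * (Set.indicator (A k) (S k) ω * R ω)
            + Set.indicator (A k) (fun ω => R ω ^ 2) ω := by
        intro ω
        by_cases hω : ω ∈ A k
        · simp only [Set.indicator_of_mem hω]
          rw [hsplit ω]; ring
        · simp [Set.indicator_of_notMem hω]
      have hint1 : Integrable (Set.indicator (A k) (fun ω => S k ω ^ 2)) μ :=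
        (hSsqint k).indicator (hAmeas k)
      have hint2 : Integrable (fun ω => Set.indicator (A k) (S k) ω * R ω) μ :=
        hIndep.integrable_mul hIndInt hRint
      have hint3 : Integrable (Set.indicator (A k) (fun ω => R ω ^ 2)) μ :=
        hRsqint.indicator (hAmeas k)
      have hint12 : Integrable (fun ω => Set.indicator (A k) (fun ω => S k ω ^ 2) ω
          + 2 * (Set.indicator (A k) (S k) ω * R ω)) μ := hint1.add (hint2.const_mul 2)
      have heq : ∫ ω in A k, S j ω ^ 2 ∂μ
          = ∫ ω, Set.indicator (A k) (fun ω => S k ω ^ 2) ω ∂μ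
            + 2 * ∫ ω, Set.indicator (A k) (S k) ω * R ω ∂μ
            + ∫ ω, Set.indicator (A k) (fun ω => R ω ^ 2) ω ∂μ := by
        rw [← integral_indicator (hAmeas k)]
        rw [integral_congr_ae (ae_of_all _ hdecomp)]
        rw [integral_add hint12 hint3, integral_add hint1 (hint2.const_mul 2),
          integral_const_mul]
      have hlow : α ^ 2 * c k ^ 2 * (μ (A k)).toReal
          ≤ ∫ ω, Set.indicator (A k) (fun ω => S k ω ^ 2) ω ∂μ := by
        have hmono : ∀ ω, Set.indicator (A k) (fun _ => α ^ 2 * c k ^ 2) ω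
            ≤ Set.indicator (A k) (fun ω => S k ω ^ 2) ω := by
          intro ω
          by_cases hω : ω ∈ A k
          · simp only [Set.indicator_of_mem hω]
            have h2 : α * c k < |S k ω| := hω.2
            have hsq : (α * c k) ^ 2 ≤ |S k ω| ^ 2 := by
              apply sq_le_sq'
              · nlinarith [abs_nonneg (S k ω)]
              · exact le_of_lt h2
            calc α ^ 2 * c k ^ 2 = (α * c k) ^ 2 := by ring
              _ ≤ |S k ω| ^ 2 := hsq
              _ = S k ω ^ 2 := sq_abs _
          · simp [Set.indicator_of_notMem hω]
        have hmint := integral_mono ((integrable_const (α ^ 2 * c k ^ 2)).indicator (hAmeas k))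
          hint1 hmono
        rwa [integral_indicator (hAmeas k), setIntegral_const, smul_eq_mul, mul_comm] at hmint
      have hthird : 0 ≤ ∫ ω, Set.indicator (A k) (fun ω => R ω ^ 2) ω ∂μ :=
        integral_nonneg fun ω => Set.indicator_nonneg (fun _ _ => sq_nonneg _) ω
      rw [heq, hcross]
      linarith
    have hTsplit : ∫ ω in A k, T ω ∂μ = ∑ j ∈ Icc 1 n, w j * ∫ ω in A k, S j ω ^ 2 ∂μ := by
      simp only [hTdef]
      rw [integral_finset_sum _ fun j _ => ((hSsqint j).const_mul _).integrableOn]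
      exact Finset.sum_congr rfl fun j _ => integral_const_mul _ _
    rw [hTsplit]
    have hsub : ∑ j ∈ Icc k n, w j * (α ^ 2 * c k ^ 2 * (μ (A k)).toReal)
        ≤ ∑ j ∈ Icc k n, w j * ∫ ω in A k, S j ω ^ 2 ∂μ := by
      apply Finset.sum_le_sum
      intro j hjm
      have hjm' := hjm
      simp only [mem_Icc] at hjm'
      exact mul_le_mul_of_nonneg_left (hj j hjm) (hw j (by omega) hjm'.2)
    have hsub2 : ∑ j ∈ Icc k n, w j * ∫ ω in A k, S j ω ^ 2 ∂μ
        ≤ ∑ j ∈ Icc 1 n, w j * ∫ ω in A k, S j ω ^ 2 ∂μ := by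
      apply Finset.sum_le_sum_of_subset_of_nonneg
      · intro j hjm
        simp only [mem_Icc] at *
        omega
      · intro j hj1 hj2
        simp only [mem_Icc] at hj1
        exact mul_nonneg (hw j hj1.1 hj1.2)
          (setIntegral_nonneg (hAmeas k) fun ω _ => sq_nonneg _)
    have hleft : ∑ j ∈ Icc k n, w j * (α ^ 2 * c k ^ 2 * (μ (A k)).toReal)
        = α ^ 2 * (μ (A k)).toReal := by
      rw [← Finset.sum_mul, hDsum k hk1 hk2, hDdef]
      simp only [if_pos hk2]
      field_simp
    linarith
  have hET : ∫ ω, T ω ∂μ = ∑ k ∈ Icc 1 n, (∫ ω, (Z k ω) ^ 2 ∂μ) / c k ^ 2 := by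
    have hZZint : ∀ i l : ℕ, Integrable (fun ω => Z i ω * Z l ω) μ := by
      intro i l
      rcases eq_or_ne i l with rfl | hne
      · simpa [sq] using (hL2 i).integrable_sq
      · exact (hindep.indepFun hne).integrable_mul (hZint i) (hZint l)
    have hESj : ∀ j, ∫ ω, S j ω ^ 2 ∂μ = ∑ i ∈ Icc 1 j, ∫ ω, (Z i ω) ^ 2 ∂μ := by
      intro j
      have h1 : ∀ ω, S j ω ^ 2 = ∑ i ∈ Icc 1 j, ∑ l ∈ Icc 1 j, Z i ω * Z l ω := by
        intro ω
        simp only [hSdef]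
        rw [sq, Finset.sum_mul_sum]
      calc ∫ ω, S j ω ^ 2 ∂μ = ∫ ω, ∑ i ∈ Icc 1 j, ∑ l ∈ Icc 1 j, Z i ω * Z l ω ∂μ :=
            integral_congr_ae (ae_of_all _ h1)
        _ = ∑ i ∈ Icc 1 j, ∑ l ∈ Icc 1 j, ∫ ω, Z i ω * Z l ω ∂μ := by
            rw [integral_finset_sum _ fun i _ => integrable_finset_sum _ fun l _ => hZZint i l]
            exact Finset.sum_congr rfl fun i _ =>
              integral_finset_sum _ fun l _ => hZZint i l
        _ = ∑ i ∈ Icc 1 j, ∫ ω, (Z i ω) ^ 2 ∂μ := by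
            refine Finset.sum_congr rfl fun i hi => ?_
            rw [Finset.sum_eq_single_of_mem i hi]
            · simp [sq]
            · intro l hl hne
              rw [(hindep.indepFun (fun h => hne (h.symm))).integral_fun_mul_eq_mul_integral (hZint i).1
                (hZint l).1, hmean l, mul_zero]
    have hswap : ∀ (g : ℕ → ℝ), ∑ j ∈ Icc 1 n, w j * ∑ i ∈ Icc 1 j, g i
        = ∑ i ∈ Icc 1 n, g i * D i := by
      intro g
      have step1 : ∀ j ∈ Icc 1 n, w j * ∑ i ∈ Icc 1 j, g i
          = ∑ i ∈ Icc 1 n, if i ≤ j then w j * g i else 0 := by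
        intro j hjm
        simp only [mem_Icc] at hjm
        rw [Finset.mul_sum, ← Finset.sum_filter]
        congr 1
        ext i
        simp only [mem_filter, mem_Icc]
        omega
      rw [Finset.sum_congr rfl step1, Finset.sum_comm]
      refine Finset.sum_congr rfl fun i hi => ?_
      simp only [mem_Icc] at hi
      rw [← Finset.sum_filter]
      have hfil : (Icc 1 n).filter (fun j => i ≤ j) = Icc i n := by
        ext j
        simp only [mem_filter, mem_Icc]
        omega
      rw [hfil, ← Finset.sum_mul, hDsum i hi.1 hi.2, mul_comm]
    calc ∫ ω, T ω ∂μ = ∑ j ∈ Icc 1 n, w j * ∫ ω, S j ω ^ 2 ∂μ := by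
          simp only [hTdef]
          rw [integral_finset_sum _ fun j _ => (hSsqint j).const_mul _]
          exact Finset.sum_congr rfl fun j _ => integral_const_mul _ _
      _ = ∑ j ∈ Icc 1 n, w j * ∑ i ∈ Icc 1 j, ∫ ω, (Z i ω) ^ 2 ∂μ := by
          exact Finset.sum_congr rfl fun j _ => by rw [hESj j]
      _ = ∑ i ∈ Icc 1 n, (∫ ω, (Z i ω) ^ 2 ∂μ) * D i := hswap _
      _ = ∑ k ∈ Icc 1 n, (∫ ω, (Z k ω) ^ 2 ∂μ) / c k ^ 2 := by
          refine Finset.sum_congr rfl fun i hi => ?_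
          simp only [mem_Icc] at hi
          rw [hDdef]
          simp only [if_pos hi.2]
          rw [div_eq_mul_inv]
  -- assembly
  have hpair : (↑(Icc 1 n : Finset ℕ) : Set ℕ).PairwiseDisjoint A := by
    intro k hk l hl hne
    exact hdisj k (by simpa using hk) l (by simpa using hl) hne
  have hμU : μ (⋃ k ∈ Icc 1 n, A k) = ∑ k ∈ Icc 1 n, μ (A k) :=
    measure_biUnion_finset hpair fun k _ => hAmeas k
  have htoReal : (μ (⋃ k ∈ Icc 1 n, A k)).toReal = ∑ k ∈ Icc 1 n, (μ (A k)).toReal := by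
    rw [hμU, ENNReal.toReal_sum fun k _ => measure_ne_top μ (A k)]
  have main : α ^ 2 * (μ (⋃ k ∈ Icc 1 n, A k)).toReal ≤ ∫ ω, T ω ∂μ := by
    rw [htoReal, Finset.mul_sum]
    calc ∑ k ∈ Icc 1 n, α ^ 2 * (μ (A k)).toReal
        ≤ ∑ k ∈ Icc 1 n, ∫ ω in A k, T ω ∂μ := Finset.sum_le_sum hkey
      _ = ∫ ω in ⋃ k ∈ Icc 1 n, A k, T ω ∂μ :=
          (integral_biUnion_finset _ (fun k _ => hAmeas k)
            (fun k hk l hl hne => hdisj k (by simpa using hk) l (by simpa using hl) hne)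
            (fun k _ => hTint.integrableOn)).symm
      _ ≤ ∫ ω, T ω ∂μ := setIntegral_le_integral hTint (ae_of_all _ hTnn)
  rw [hcover]
  rw [← ENNReal.ofReal_toReal (measure_ne_top μ (⋃ k ∈ Icc 1 n, A k))]
  apply ENNReal.ofReal_le_ofReal
  rw [hET] at main
  rw [inv_pow, inv_mul_eq_div, le_div_iff₀ (by positivity)]
  nlinarith [main]
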